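/- Let A = [a_1+1, ..., a_r+1] be an admissible linear chain with all a_i positive integers, and let n be a positive integer. Then the adjoint of [A, n+1] (the chain A extended by the entry n+1) equals [2_n] ∗ A*, where [2_n] is the chain of n twos. -/

import Mathlib

/-- The tridiagonal matrix of a linear chain: diagonal entries from the list,
entries `-1` on the first sub- and super-diagonals, `0` elsewhere. -/
def chainMatrix (l : List ℤ) : Matrix (Fin l.length) (Fin l.length) ℤ :=
  fun i j =>
    if i = j then l.get i
    else if (i : ℕ) + 1 = (j : ℕ) ∨ (j : ℕ) + 1 = (i : ℕ) then -1 else 0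

/-- The discriminant of a linear chain. -/
def disc (l : List ℤ) : ℤ := (chainMatrix l).det

/-- A linear chain is admissible if it is nonempty and all entries are ≥ 2. -/
def Admissible (l : List ℤ) : Prop := l ≠ [] ∧ ∀ a ∈ l, 2 ≤ a

/-- The inductance of a chain. -/
def ind (l : List ℤ) : ℚ := (disc l.tail : ℚ) / (disc l : ℚ)

/-- The joining operation on nonempty linear chains. -/
def join (A B : List ℤ) : List ℤ := A.dropLast ++ [A.getLast! + B.head! - 1] ++ B.tail

/-- `B` is the adjoint of `A`. -/
def IsAdjoint (A B : List ℤ) : Prop := Admissible B ∧ ind B = 1 - ind A.reverse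

theorem cm_diag (l : List ℤ) (i j : Fin l.length) (h : (i : ℕ) = (j : ℕ)) :
    chainMatrix l i j = l.get i := by
  rw [chainMatrix, if_pos (Fin.ext h)]

theorem cm_off (l : List ℤ) (i j : Fin l.length)
    (h : (i : ℕ) + 1 = (j : ℕ) ∨ (j : ℕ) + 1 = (i : ℕ)) :
    chainMatrix l i j = -1 := by
  rw [chainMatrix, if_neg, if_pos h]
  intro hc; rw [hc] at h; omega

theorem cm_zero (l : List ℤ) (i j : Fin l.length) (h1 : (i : ℕ) ≠ (j : ℕ))
    (h2 : (i : ℕ) + 1 ≠ (j : ℕ)) (h3 : (j : ℕ) + 1 ≠ (i : ℕ)) :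
    chainMatrix l i j = 0 := by
  rw [chainMatrix, if_neg (fun hc => h1 (by rw [hc])), if_neg]
  rintro (h | h) <;> omega

theorem subm1 (a : ℤ) (l : List ℤ) :
    (chainMatrix (a :: l)).submatrix Fin.succ Fin.succ = chainMatrix l := by
  ext i j
  simp only [Matrix.submatrix_apply, chainMatrix, Fin.succ_inj, Fin.val_succ]
  by_cases h : i = j
  · simp [h]
  · simp only [h, if_false]
    congr 1
    simp only [eq_iff_iff]; omega

theorem disc_cons (a b : ℤ) (t : List ℤ) :
    disc (a :: b :: t) = a * disc (b :: t) - disc t := by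
  have hM := Matrix.det_succ_column_zero (n := t.length + 1) (chainMatrix (a :: b :: t))
  rw [Fin.sum_univ_succ, Fin.sum_univ_succ] at hM
  have e0 : (Fin.succ (0 : Fin (t.length + 1))).succAbove (0 : Fin (t.length + 1)) = 0 := by
    rw [Fin.succAbove_of_castSucc_lt]
    · exact Fin.castSucc_zero
    · simp [Fin.lt_def]
  have esucc : ∀ i : Fin t.length,
      (Fin.succ (0 : Fin (t.length + 1))).succAbove i.succ = i.succ.succ := by
    intro i
    rw [Fin.succAbove_of_le_castSucc]
    simp [Fin.le_def]
  have h00 : chainMatrix (a :: b :: t) (0 : Fin (t.length + 2)) (0 : Fin (t.length + 2)) = a :=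
    cm_diag _ _ _ rfl
  have h10 : chainMatrix (a :: b :: t) (Fin.succ (0 : Fin (t.length + 1)))
      (0 : Fin (t.length + 2)) = -1 := by
    apply cm_off
    right
    simp
  have hzero : ∀ i : Fin t.length,
      chainMatrix (a :: b :: t) i.succ.succ (0 : Fin (t.length + 2)) = 0 := by
    intro i
    apply cm_zero <;> simp [Fin.val_succ]
  have hsub0 : ((chainMatrix (a :: b :: t)).submatrix
      (Fin.succAbove (0 : Fin (t.length + 2))) Fin.succ) =
      (chainMatrix (b :: t) : Matrix (Fin (t.length + 1)) (Fin (t.length + 1)) ℤ) := by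
    rw [Fin.succAbove_zero]
    exact subm1 a (b :: t)
  have hN00 : ((chainMatrix (a :: b :: t)).submatrix
      (Fin.succ (0 : Fin (t.length + 1))).succAbove Fin.succ)
      (0 : Fin (t.length + 1)) (0 : Fin (t.length + 1)) = -1 := by
    rw [Matrix.submatrix_apply, e0]
    apply cm_off
    left
    simp
  have hNrow : ∀ j : Fin t.length, ((chainMatrix (a :: b :: t)).submatrix
      (Fin.succ (0 : Fin (t.length + 1))).succAbove Fin.succ)
      (0 : Fin (t.length + 1)) j.succ = 0 := by
    intro j
    rw [Matrix.submatrix_apply, e0]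
    apply cm_zero <;> simp [Fin.val_succ]
  have hNsub : (((chainMatrix (a :: b :: t)).submatrix
      (Fin.succ (0 : Fin (t.length + 1))).succAbove Fin.succ).submatrix Fin.succ Fin.succ)
      = chainMatrix t := by
    ext i j
    simp only [Matrix.submatrix_apply, esucc]
    have e1 := congrFun (congrFun (subm1 a (b :: t)) i.succ) j.succ
    have e2 := congrFun (congrFun (subm1 b t) i) j
    simp only [Matrix.submatrix_apply] at e1 e2
    rw [e1, e2]
  have hNdet : ((chainMatrix (a :: b :: t)).submatrix
      (Fin.succ (0 : Fin (t.length + 1))).succAbove Fin.succ).det = - disc t := by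
    have h := Matrix.det_succ_row_zero ((chainMatrix (a :: b :: t)).submatrix
      (Fin.succ (0 : Fin (t.length + 1))).succAbove Fin.succ)
    rw [Fin.sum_univ_succ] at h
    rw [h, Finset.sum_eq_zero]
    · rw [hN00, Fin.succAbove_zero, hNsub]
      simp [disc]
    · intro j _
      rw [hNrow]
      ring
  rw [Finset.sum_eq_zero (fun i _ => by rw [hzero]; ring)] at hM
  rw [h00, h10, hNdet] at hM
  rw [hsub0] at hM
  have h2 : Matrix.det (n := Fin (t.length + 1)) (chainMatrix (b :: t)) = disc (b :: t) := rfl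
  rw [h2] at hM
  exact hM.trans (by simp only [Fin.val_zero, Fin.val_succ, pow_zero, pow_one]; ring)

theorem disc_nil : disc [] = 1 := by
  simp [disc, Matrix.det_fin_zero]

theorem disc_single (a : ℤ) : disc [a] = a := by
  simp [disc, Matrix.det_fin_one, chainMatrix]

theorem disc_cons' (a : ℤ) (l : List ℤ) (h : l ≠ []) :
    disc (a :: l) = a * disc l - disc l.tail := by
  match l with
  | [] => exact absurd rfl h
  | b :: t => rw [disc_cons]; rfl

theorem disc_pos_lt : ∀ (l : List ℤ), (∀ x ∈ l, 2 ≤ x) →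
    0 < disc l ∧ (l ≠ [] → disc l.tail < disc l)
  | [], _ => ⟨by rw [disc_nil]; norm_num, fun h => absurd rfl h⟩
  | [a], h => by
    have ha : 2 ≤ a := h a (by simp)
    refine ⟨by rw [disc_single]; omega, fun _ => ?_⟩
    show disc [] < disc [a]
    rw [disc_nil, disc_single]; omega
  | a :: b :: t, h => by
    have ha : 2 ≤ a := h a (by simp)
    obtain ⟨hD, hlt⟩ := disc_pos_lt (b :: t) (fun x hx => h x (by simp [hx]))
    have hlt' := hlt (by simp)
    simp only [List.tail_cons] at hlt'
    constructor
    · nlinarith [disc_cons a b t]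
    · intro _
      show disc (b :: t) < _
      nlinarith [disc_cons a b t]

theorem disc_pos (l : List ℤ) (h : ∀ x ∈ l, 2 ≤ x) : 0 < disc l :=
  (disc_pos_lt l h).1

theorem disc_lt (l : List ℤ) (hne : l ≠ []) (h : ∀ x ∈ l, 2 ≤ x) :
    disc l.tail < disc l :=
  (disc_pos_lt l h).2 hne

theorem disc_replicate (l : List ℤ) (hne : l ≠ []) : ∀ (m : ℕ),
    disc (List.replicate m 2 ++ l) = (m + 1 : ℤ) * disc l - (m : ℤ) * disc l.tail ∧
    disc ((List.replicate m 2 ++ l).tail) = (m : ℤ) * disc l - ((m : ℤ) - 1) * disc l.tail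
  | 0 => by
    constructor
    · simp
    · simp only [List.replicate, List.nil_append, Nat.cast_zero]
      ring
  | m + 1 => by
    obtain ⟨h1, h2⟩ := disc_replicate l hne m
    have hrep : List.replicate (m + 1) (2 : ℤ) ++ l = 2 :: (List.replicate m 2 ++ l) := by
      simp [List.replicate_succ]
    have hne' : List.replicate m (2 : ℤ) ++ l ≠ [] := by
      simp [hne]
    rw [hrep]
    constructor
    · rw [disc_cons' 2 _ hne', h1, h2]
      push_cast; ring
    · show disc (List.replicate m 2 ++ l) = _
      rw [h1]; push_cast; ring

theorem key_algebra (μ D T dR dRt : ℚ) (hD : D ≠ 0) (hdR : dR ≠ 0)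
    (h1 : (μ + 1) * (D + T) - μ * T ≠ 0) (h2 : (μ + 1 + 1) * dR - dRt ≠ 0)
    (hB : T / D = 1 - dRt / dR) :
    (μ * (D + T) - (μ - 1) * T) / ((μ + 1) * (D + T) - μ * T)
      = 1 - dR / ((μ + 1 + 1) * dR - dRt) := by
  field_simp at hB
  rw [show (1 : ℚ) - dR / ((μ + 1 + 1) * dR - dRt)
      = (((μ + 1 + 1) * dR - dRt) - dR) / ((μ + 1 + 1) * dR - dRt) by rw [sub_div, div_self h2]]
  rw [div_eq_div_iff h1 h2]
  linear_combination hB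

theorem adjoint_append (as : List ℤ) (has : as ≠ []) (hpos : ∀ a ∈ as, 0 < a)
    (n : ℕ) (hn : 0 < n) (B : List ℤ)
    (hB : IsAdjoint (as.map (· + 1)) B) :
    IsAdjoint (as.map (· + 1) ++ [(n : ℤ) + 1]) (join (List.replicate n 2) B) := by
  obtain ⟨⟨hBne, hBge⟩, hBind⟩ := hB
  obtain ⟨h, t, rfl⟩ : ∃ h t, B = h :: t := by
    cases B with
    | nil => exact absurd rfl hBne
    | cons h t => exact ⟨h, t, rfl⟩
  obtain ⟨m, rfl⟩ : ∃ m, n = m + 1 := ⟨n - 1, by omega⟩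
  set A := as.map (· + 1) with hA
  have hAne : A ≠ [] := by simpa [hA] using has
  have hAge : ∀ x ∈ A, 2 ≤ x := by
    intro x hx
    simp only [hA, List.mem_map] at hx
    obtain ⟨a, hma, rfl⟩ := hx
    have := hpos a hma; omega
  have hRne : A.reverse ≠ [] := by simpa using hAne
  have hRge : ∀ x ∈ A.reverse, 2 ≤ x := fun x hx => hAge x (List.mem_reverse.mp hx)
  -- compute the join
  have hdrop : (List.replicate (m + 1) (2 : ℤ)).dropLast = List.replicate m 2 := by
    rw [List.replicate_succ', List.dropLast_concat]
  have hlast : (List.replicate (m + 1) (2 : ℤ)).getLast! = 2 := by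
    rw [List.replicate_succ']
    exact List.getLast!_of_getLast? (by simp)
  have hC : join (List.replicate (m + 1) 2) (h :: t) = List.replicate m 2 ++ (h + 1) :: t := by
    rw [join, hdrop, hlast]
    simp only [List.head!_cons, List.tail_cons]
    rw [show (2 + h - 1 : ℤ) = h + 1 by ring, List.append_assoc, List.singleton_append]
  rw [hC]
  -- admissibility
  have hh2 : 2 ≤ h := hBge h (by simp)
  have ht2 : ∀ x ∈ t, 2 ≤ x := fun x hx => hBge x (by simp [hx])
  constructor
  · constructor
    · simp
    · intro x hx
      simp only [List.mem_append, List.mem_replicate, List.mem_cons] at hx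
      rcases hx with ⟨_, rfl⟩ | rfl | hx
      · norm_num
      · omega
      · exact ht2 x hx
  -- the inductance identity
  have hDT : disc ((h + 1) :: t) = disc (h :: t) + disc t := by
    cases t with
    | nil => rw [disc_single, disc_single, disc_nil]
    | cons c t' => rw [disc_cons, disc_cons]; ring
  obtain ⟨hr1, hr2⟩ := disc_replicate ((h + 1) :: t) (by simp) m
  rw [List.tail_cons, hDT] at hr1 hr2
  have hrev : (A ++ [((m : ℤ) + 1) + 1]).reverse = (((m : ℤ) + 1) + 1) :: A.reverse := by
    simp
  have hXd : disc ((((m : ℤ) + 1) + 1) :: A.reverse)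
      = (((m : ℤ) + 1) + 1) * disc A.reverse - disc A.reverse.tail :=
    disc_cons' _ _ hRne
  have hDpos : 0 < disc (h :: t) := disc_pos _ hBge
  have hTpos : 0 < disc t := disc_pos _ ht2
  have hdRpos : 0 < disc A.reverse := disc_pos _ hRge
  have hdlt : disc A.reverse.tail < disc A.reverse := disc_lt _ hRne hRge
  have hm0 : (0 : ℤ) ≤ (m : ℤ) := Int.ofNat_nonneg m
  have hD0 : ((disc (h :: t) : ℚ)) ≠ 0 := by exact_mod_cast hDpos.ne'
  have hdR0 : ((disc A.reverse : ℚ)) ≠ 0 := by exact_mod_cast hdRpos.ne'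
  have hden1 : ((m : ℚ) + 1) * ((disc (h :: t) : ℚ) + (disc t : ℚ)) - (m : ℚ) * (disc t : ℚ) ≠ 0 := by
    have h1 : (0 : ℤ) < ((m : ℤ) + 1) * (disc (h :: t) + disc t) - (m : ℤ) * disc t := by
      nlinarith
    have h2 := h1.ne'
    push_cast
    exact_mod_cast h2
  have hden2 : ((m : ℚ) + 1 + 1) * (disc A.reverse : ℚ) - (disc A.reverse.tail : ℚ) ≠ 0 := by
    have h1 : (0 : ℤ) < ((m : ℤ) + 1 + 1) * disc A.reverse - disc A.reverse.tail := by
      nlinarith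
    have h2 := h1.ne'
    push_cast
    exact_mod_cast h2
  rw [ind, ind] at hBind ⊢
  rw [List.tail_cons] at hBind
  rw [hr1, hr2]
  push_cast
  rw [hrev, List.tail_cons, hXd]
  push_cast
  exact key_algebra (m : ℚ) _ _ _ _ hD0 hdR0 hden1 hden2 hBind
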